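/- Kučera counting lemma: let A ⊆ 2^ℕ be measurable, let σ be a binary string of length ℓ, let δ > 0, and suppose λ(A ∩ [σ]) ≥ δ·2^{-ℓ}. Then for every m ≥ 1, the number of extensions τ of σ of length ℓ+m with λ(A ∩ [τ]) ≥ (δ/2)·2^{-(ℓ+m)} is at least δ·2^{m-1}. In particular, if δ·2^{m-1} ≥ 2 then there are at least two such extensions τ. -/

import Mathlib

open MeasureTheory

/-- The cylinder of infinite binary sequences extending the finite string `σ`. -/
def cyl (σ : List Bool) : Set (ℕ → Bool) :=
  {X | ∀ i, (h : i < σ.length) → X i = σ.get ⟨i, h⟩}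

/-- `μ` is the fair-coin measure: each cylinder `[σ]` has measure `2^{-|σ|}`. -/
def IsFairCoin (μ : Measure (ℕ → Bool)) : Prop :=
  ∀ σ : List Bool, μ (cyl σ) = (1 / 2) ^ σ.length

open ENNReal
lemma cyl_measurable (σ : List Bool) : MeasurableSet (cyl σ) := by
  have : cyl σ = ⋂ i : Fin σ.length, {X : ℕ → Bool | X i = σ.get i} := by
    ext X
    simp only [cyl, Set.mem_setOf_eq, Set.mem_iInter]
    constructor
    · intro h i; exact h i i.isLt
    · intro h i hi; exact h ⟨i, hi⟩
  rw [this]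
  exact MeasurableSet.iInter fun i =>
    (measurable_pi_apply (i : ℕ)) (measurableSet_singleton _)

lemma mem_cyl_append (σ s : List Bool) (X : ℕ → Bool) :
    X ∈ cyl (σ ++ s) ↔ X ∈ cyl σ ∧ ∀ j, (h : j < s.length) → X (σ.length + j) = s.get ⟨j, h⟩ := by
  simp only [cyl, Set.mem_setOf_eq, List.length_append]
  constructor
  · intro h
    constructor
    · intro i hi
      have := h i (by omega)
      simp only [List.get_eq_getElem] at this ⊢
      rwa [List.getElem_append_left] at this
    · intro j hj
      have := h (σ.length + j) (by omega)
      simp only [List.get_eq_getElem] at this ⊢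
      rw [List.getElem_append_right (by omega)] at this
      simpa using this
  · intro ⟨h1, h2⟩ i hi
    rcases lt_or_ge i σ.length with hlt | hge
    · simp only [List.get_eq_getElem]
      rw [List.getElem_append_left hlt]
      exact h1 i hlt
    · have := h2 (i - σ.length) (by omega)
      simp only [List.get_eq_getElem] at this ⊢
      rw [List.getElem_append_right hge]
      rw [Nat.add_sub_cancel' hge] at this
      exact this

lemma cyl_append_ofFn (σ : List Bool) (m : ℕ) (f : Fin m → Bool) :
    cyl (σ ++ List.ofFn f) =
      cyl σ ∩ (fun (X : ℕ → Bool) (j : Fin m) => X (σ.length + j)) ⁻¹' {f} := by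
  ext X
  rw [Set.mem_inter_iff, mem_cyl_append]
  simp only [Set.mem_preimage, Set.mem_singleton_iff, funext_iff, List.length_ofFn]
  constructor
  · rintro ⟨h1, h2⟩
    refine ⟨h1, fun j => ?_⟩
    have := h2 j j.isLt
    simpa [List.get_ofFn] using this
  · rintro ⟨h1, h2⟩
    refine ⟨h1, fun j hj => ?_⟩
    have := h2 ⟨j, hj⟩
    simpa [List.get_ofFn] using this

lemma measure_decomp (μ : Measure (ℕ → Bool)) (A : Set (ℕ → Bool)) (hA : MeasurableSet A)
    (σ : List Bool) (m : ℕ) :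
    μ (A ∩ cyl σ) = ∑ f : Fin m → Bool, μ (A ∩ cyl (σ ++ List.ofFn f)) := by
  have hU : A ∩ cyl σ = ⋃ f : Fin m → Bool, A ∩ cyl (σ ++ List.ofFn f) := by
    ext X
    simp only [Set.mem_iUnion, Set.mem_inter_iff, cyl_append_ofFn, Set.mem_preimage,
      Set.mem_singleton_iff]
    constructor
    · rintro ⟨hX, hc⟩
      exact ⟨fun j => X (σ.length + j), hX, hc, rfl⟩
    · rintro ⟨f, hX, hc, _⟩
      exact ⟨hX, hc⟩
  rw [hU, measure_iUnion ?_ ?_, tsum_fintype]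
  · intro f g hfg
    simp only [Function.onFun, cyl_append_ofFn]
    refine Set.disjoint_left.mpr fun X hX hX' => hfg ?_
    rw [← hX.2.2, ← hX'.2.2]
  · intro f
    exact hA.inter (cyl_measurable _)


/-- Kučera counting lemma. -/
theorem stmt_7 (μ : Measure (ℕ → Bool)) (hμ : IsFairCoin μ)
    (A : Set (ℕ → Bool)) (hA : MeasurableSet A)
    (σ : List Bool) (ℓ : ℕ) (hσ : σ.length = ℓ)
    (δ : ℝ) (hδ : 0 < δ)
    (h : ENNReal.ofReal δ * (1 / 2) ^ ℓ ≤ μ (A ∩ cyl σ)) :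
    ∀ m : ℕ, 1 ≤ m →
      δ * 2 ^ (m - 1) ≤
        (({τ : List Bool | σ <+: τ ∧ τ.length = ℓ + m ∧
            ENNReal.ofReal (δ / 2) * (1 / 2) ^ (ℓ + m) ≤ μ (A ∩ cyl τ)}).ncard : ℝ) ∧
      (2 ≤ δ * 2 ^ (m - 1) →
        ∃ τ₁ τ₂ : List Bool, τ₁ ≠ τ₂ ∧
          (σ <+: τ₁ ∧ τ₁.length = ℓ + m ∧
            ENNReal.ofReal (δ / 2) * (1 / 2) ^ (ℓ + m) ≤ μ (A ∩ cyl τ₁)) ∧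
          (σ <+: τ₂ ∧ τ₂.length = ℓ + m ∧
            ENNReal.ofReal (δ / 2) * (1 / 2) ^ (ℓ + m) ≤ μ (A ∩ cyl τ₂))) := by
  intro m hm
  classical
  set S : Set (List Bool) := {τ : List Bool | σ <+: τ ∧ τ.length = ℓ + m ∧
      ENNReal.ofReal (δ / 2) * (1 / 2) ^ (ℓ + m) ≤ μ (A ∩ cyl τ)} with hS
  set good : Finset (Fin m → Bool) :=
    Finset.univ.filter (fun f => ENNReal.ofReal (δ / 2) * (1 / 2) ^ (ℓ + m) ≤
      μ (A ∩ cyl (σ ++ List.ofFn f))) with hgood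
  -- the length of σ ++ ofFn f
  have hlen : ∀ f : Fin m → Bool, (σ ++ List.ofFn f).length = ℓ + m := by
    intro f; simp [hσ]
  -- S is the image of good
  have hSim : S = ↑(good.image (fun f => σ ++ List.ofFn f)) := by
    ext τ
    simp only [hS, Set.mem_setOf_eq, Finset.coe_image, Set.mem_image, Finset.mem_coe,
      hgood, Finset.mem_filter, Finset.mem_univ, true_and]
    constructor
    · rintro ⟨⟨t, rfl⟩, hlen', hP⟩
      have htl : t.length = m := by
        have := hlen'
        simp only [List.length_append, hσ] at this
        omega
      refine ⟨fun j => t.get (Fin.cast htl.symm j), ?_, ?_⟩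
      · have : List.ofFn (fun j : Fin m => t.get (Fin.cast htl.symm j)) = t := by
          apply List.ext_getElem
          · simp [htl]
          · intro i h1 h2
            simp [List.getElem_ofFn]
        rwa [this]
      · have : List.ofFn (fun j : Fin m => t.get (Fin.cast htl.symm j)) = t := by
          apply List.ext_getElem
          · simp [htl]
          · intro i h1 h2
            simp [List.getElem_ofFn]
        rw [this]
    · rintro ⟨f, hP, rfl⟩
      exact ⟨⟨List.ofFn f, rfl⟩, hlen f, hP⟩
  have hinj : Function.Injective (fun f : Fin m → Bool => σ ++ List.ofFn f) := by
    intro f g hfg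
    simp only [List.append_cancel_left_eq] at hfg
    exact List.ofFn_injective hfg
  have hScard : S.ncard = good.card := by
    rw [hSim, Set.ncard_coe_finset, Finset.card_image_of_injective _ hinj]
  -- measure decomposition and bounds
  have hdec := measure_decomp μ A hA σ m
  have hsplit := Finset.sum_filter_add_sum_filter_not (Finset.univ : Finset (Fin m → Bool))
    (fun f => ENNReal.ofReal (δ / 2) * (1 / 2) ^ (ℓ + m) ≤ μ (A ∩ cyl (σ ++ List.ofFn f)))
    (fun f => μ (A ∩ cyl (σ ++ List.ofFn f)))
  have hgoodsum : ∑ f ∈ good, μ (A ∩ cyl (σ ++ List.ofFn f)) ≤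
      good.card * (1 / 2 : ℝ≥0∞) ^ (ℓ + m) := by
    rw [← nsmul_eq_mul]
    apply Finset.sum_le_card_nsmul
    intro f _
    calc μ (A ∩ cyl (σ ++ List.ofFn f)) ≤ μ (cyl (σ ++ List.ofFn f)) :=
          measure_mono Set.inter_subset_right
      _ = (1 / 2 : ℝ≥0∞) ^ (ℓ + m) := by rw [hμ, hlen]
  have hbadsum : ∑ f ∈ (Finset.univ : Finset (Fin m → Bool)).filter (fun f => ¬ (ENNReal.ofReal (δ / 2) * (1 / 2) ^ (ℓ + m) ≤
        μ (A ∩ cyl (σ ++ List.ofFn f)))), μ (A ∩ cyl (σ ++ List.ofFn f)) ≤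
      (2 ^ m : ℕ) * (ENNReal.ofReal (δ / 2) * (1 / 2 : ℝ≥0∞) ^ (ℓ + m)) := by
    calc _ ≤ ((Finset.univ : Finset (Fin m → Bool)).filter (fun f => ¬ (ENNReal.ofReal (δ / 2) * (1 / 2) ^ (ℓ + m) ≤
          μ (A ∩ cyl (σ ++ List.ofFn f))))).card •
          (ENNReal.ofReal (δ / 2) * (1 / 2 : ℝ≥0∞) ^ (ℓ + m)) := by
          apply Finset.sum_le_card_nsmul
          intro f hf
          simp only [Finset.mem_filter] at hf
          exact le_of_not_ge hf.2
      _ ≤ (2 ^ m : ℕ) * (ENNReal.ofReal (δ / 2) * (1 / 2 : ℝ≥0∞) ^ (ℓ + m)) := by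
          rw [nsmul_eq_mul]
          gcongr
          calc (Finset.univ.filter _).card ≤ Fintype.card (Fin m → Bool) :=
                Finset.card_filter_le _ _
            _ = 2 ^ m := by simp [Fintype.card_fun]
  -- combine
  have hkey : ENNReal.ofReal δ * (1 / 2) ^ ℓ ≤
      good.card * (1 / 2 : ℝ≥0∞) ^ (ℓ + m) +
      (2 ^ m : ℕ) * (ENNReal.ofReal (δ / 2) * (1 / 2 : ℝ≥0∞) ^ (ℓ + m)) := by
    calc ENNReal.ofReal δ * (1 / 2) ^ ℓ ≤ μ (A ∩ cyl σ) := h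
      _ = ∑ f : Fin m → Bool, μ (A ∩ cyl (σ ++ List.ofFn f)) := hdec
      _ = _ := hsplit.symm
      _ ≤ _ := add_le_add hgoodsum hbadsum
  -- convert to reals
  have hp : ∀ n : ℕ, ((1 : ℝ≥0∞) / 2) ^ n ≠ ⊤ := fun n =>
    ENNReal.pow_ne_top (by norm_num)
  have hfin1 : (good.card : ℝ≥0∞) * (1 / 2 : ℝ≥0∞) ^ (ℓ + m) ≠ ⊤ :=
    ENNReal.mul_ne_top (ENNReal.natCast_ne_top _) (hp _)
  have hfin2 : ((2 ^ m : ℕ) : ℝ≥0∞) * (ENNReal.ofReal (δ / 2) * (1 / 2 : ℝ≥0∞) ^ (ℓ + m)) ≠ ⊤ :=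
    ENNReal.mul_ne_top (ENNReal.natCast_ne_top _)
      (ENNReal.mul_ne_top ENNReal.ofReal_ne_top (hp _))
  have hfin : (good.card : ℝ≥0∞) * (1 / 2 : ℝ≥0∞) ^ (ℓ + m) +
      (2 ^ m : ℕ) * (ENNReal.ofReal (δ / 2) * (1 / 2 : ℝ≥0∞) ^ (ℓ + m)) ≠ ⊤ :=
    ENNReal.add_ne_top.mpr ⟨hfin1, hfin2⟩
  have hreal := ENNReal.toReal_mono hfin hkey
  rw [ENNReal.toReal_add hfin1 hfin2] at hreal
  simp only [ENNReal.toReal_mul, ENNReal.toReal_pow, ENNReal.toReal_ofReal hδ.le,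
    ENNReal.toReal_ofReal (by positivity : (0:ℝ) ≤ δ / 2), ENNReal.toReal_div,
    ENNReal.toReal_one, ENNReal.toReal_ofNat, ENNReal.toReal_natCast] at hreal
  -- final real arithmetic
  obtain ⟨m', rfl⟩ : ∃ m', m = m' + 1 := ⟨m - 1, by omega⟩
  have hmain : δ * 2 ^ (m' + 1 - 1) ≤ (S.ncard : ℝ) := by
    rw [hScard]
    simp only [Nat.add_sub_cancel]
    have hpow : (0:ℝ) < (1 / 2) ^ (ℓ + m' + 1) := by positivity
    rw [show ℓ + (m' + 1) = (ℓ + m') + 1 from by ring] at hreal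
    have h2 : ((1:ℝ)/2) ^ ℓ = (1/2) ^ (ℓ + m' + 1) * 2 ^ (m' + 1) := by
      rw [div_pow, one_pow]
      rw [show ℓ + m' + 1 = ℓ + (m' + 1) from by ring, pow_add]
      field_simp
      rw [mul_assoc, ← mul_pow, ← mul_pow]
      norm_num
    push_cast at hreal
    rw [h2, show (2:ℝ) ^ (m' + 1) = 2 * 2 ^ m' from by ring] at hreal
    rw [← mul_le_mul_iff_of_pos_right hpow]
    ring_nf at hreal ⊢
    linarith [hreal]
  refine ⟨hmain, fun h2le => ?_⟩
  have hcard2 : 2 ≤ S.ncard := by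
    have : (2:ℝ) ≤ (S.ncard : ℝ) := le_trans h2le hmain
    exact_mod_cast this
  have hfinS : S.Finite := by rw [hSim]; exact (good.image _).finite_toSet
  obtain ⟨τ₁, τ₂, hτ₁, hτ₂, hne⟩ := (Set.one_lt_ncard_iff hfinS).mp (by omega)
  exact ⟨τ₁, τ₂, hne, hτ₁, hτ₂⟩
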